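/- Let T be a strongly Cesàro bounded operator on a Banach space X, let q and q* be the cotypes of X and X* respectively, and set s = min(q, q*). If s < ∞, then ‖T^n‖ = O(n/(log n)^{1/s}); in particular ‖T^n‖ = o(n). -/

import Mathlib

open MeasureTheory Filter Asymptotics Finset

/-- The sign `±1` attached to a Boolean. -/
def rsign (b : Bool) : ℝ := if b then 1 else -1

/-- `X` has (Rademacher) cotype `q`: `∑ ‖xᵢ‖^q` is at most `K` times the expectation over
all sign patterns of `‖∑ εᵢ xᵢ‖^q`. -/
def HasCotypeQ (X : Type) [NormedAddCommGroup X] [NormedSpace ℝ X] (q : ℝ) : Prop :=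
  ∃ K : ℝ, 0 < K ∧ ∀ n : ℕ, ∀ x : Fin n → X,
    2 ^ n * ∑ i, ‖x i‖ ^ q ≤
      K * ∑ ε : Fin n → Bool, ‖∑ i, rsign (ε i) • x i‖ ^ q

/-- `T` is strongly Cesàro bounded with constant `C`. -/
def StrongCesaroBounded {X : Type} [NormedAddCommGroup X] [NormedSpace ℂ X]
    (T : X →L[ℂ] X) (C : ℝ) : Prop :=
  0 < C ∧ ∀ n : ℕ, 1 ≤ n → ∀ x : X, ∀ φ : StrongDual ℂ X,
    ∑ k ∈ Finset.range n, ‖φ ((T ^ k) x)‖ ≤ C * n * ‖φ‖ * ‖x‖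

namespace SCBAux

lemma abs_rsign (b : Bool) : |rsign b| = 1 := by cases b <;> simp [rsign]

lemma rsign_mul_self (b : Bool) : rsign b * rsign b = 1 := by cases b <;> norm_num [rsign]

lemma rsign_not (b : Bool) : rsign (!b) = - rsign b := by cases b <;> simp [rsign]

/-- sign of the `j`-th coordinate of a boolean vector, defaulting to `1`. -/
def sgnf {m : ℕ} (ε : Fin m → Bool) (j : ℕ) : ℝ :=
  if h : j < m then rsign (ε ⟨j, h⟩) else 1

lemma abs_sgnf {m : ℕ} (ε : Fin m → Bool) (j : ℕ) : |sgnf ε j| ≤ 1 := by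
  unfold sgnf; split
  · exact le_of_eq (abs_rsign _)
  · norm_num

lemma sgnf_eq {m : ℕ} (ε : Fin m → Bool) (j : ℕ) (h : j < m) :
    sgnf ε j = rsign (ε ⟨j, h⟩) := dif_pos h

lemma sum_sgnf_mul {m : ℕ} {a b : ℕ} (ha : a < m) (hb : b < m) :
    ∑ ε : Fin m → Bool, sgnf ε a * sgnf ε b = if a = b then (2:ℝ)^m else 0 := by
  rcases eq_or_ne a b with rfl | hne
  · simp only [if_pos rfl]
    have h1 : ∀ ε : Fin m → Bool, sgnf ε a * sgnf ε a = 1 := fun ε => by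
      rw [sgnf_eq ε a ha]; exact rsign_mul_self _
    rw [Finset.sum_congr rfl (fun ε _ => h1 ε), Finset.sum_const, Finset.card_univ,
      Fintype.card_fun, Fintype.card_bool, Fintype.card_fin]
    push_cast
    ring
  · simp only [if_neg hne]
    set aF : Fin m := ⟨a, ha⟩ with haF
    set σ : (Fin m → Bool) → (Fin m → Bool) := fun ε => Function.update ε aF (!(ε aF)) with hσdef
    have hσinv : Function.Involutive σ := by
      intro ε; funext i
      rcases eq_or_ne i aF with rfl | hi
      · simp [σ]
      · simp [σ, Function.update_of_ne hi]
    have key : ∀ ε : Fin m → Bool,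
        sgnf (σ ε) a * sgnf (σ ε) b = - (sgnf ε a * sgnf ε b) := by
      intro ε
      have h1 : sgnf (σ ε) a = - sgnf ε a := by
        rw [sgnf_eq _ a ha, sgnf_eq _ a ha]
        show rsign (Function.update ε aF (!(ε aF)) aF) = - rsign (ε aF)
        rw [Function.update_self, rsign_not]
      have h2 : sgnf (σ ε) b = sgnf ε b := by
        rw [sgnf_eq _ b hb, sgnf_eq _ b hb]
        have hbne : (⟨b, hb⟩ : Fin m) ≠ aF := by
          simp only [haF, ne_eq, Fin.mk.injEq]
          intro h; exact hne h.symm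
        show rsign (Function.update ε aF (!(ε aF)) ⟨b, hb⟩) = rsign (ε ⟨b, hb⟩)
        rw [Function.update_of_ne hbne]
      rw [h1, h2]; ring
    have hsum : ∑ ε : Fin m → Bool, sgnf ε a * sgnf ε b
        = ∑ ε : Fin m → Bool, sgnf (σ ε) a * sgnf (σ ε) b :=
      (Equiv.sum_comp hσinv.toPerm (fun ε => sgnf ε a * sgnf ε b)).symm
    have hneg : ∑ ε : Fin m → Bool, sgnf ε a * sgnf ε b
        = - ∑ ε : Fin m → Bool, sgnf ε a * sgnf ε b := by
      conv_lhs => rw [hsum]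
      rw [← Finset.sum_neg_distrib]
      exact Finset.sum_congr rfl fun ε _ => key ε
    linarith

lemma dyadic_partition {M : Type*} [AddCommMonoid M] (f : ℕ → M) (R : ℕ) :
    ∑ i ∈ Finset.range R, ∑ j ∈ Finset.Ico (2^i) (2^(i+1)), f j
      = ∑ j ∈ Finset.Ico 1 (2^R), f j := by
  induction R with
  | zero => simp
  | succ R ih =>
      rw [Finset.sum_range_succ, ih,
        Finset.sum_Ico_consecutive f Nat.one_le_two_pow
          (Nat.pow_le_pow_right (by norm_num) (Nat.le_succ R))]

lemma harmonic_block_lower (c : ℝ) (hc : 0 ≤ c) (i : ℕ) :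
    c / 2 ≤ ∑ j ∈ Finset.Ico (2^i : ℕ) (2^(i+1)), c * ((j:ℝ)+1)⁻¹ := by
  have hcard : (Finset.Ico (2^i : ℕ) (2^(i+1))).card = 2^i := by
    rw [Nat.card_Ico, pow_succ]; omega
  have hterm : ∀ j ∈ Finset.Ico (2^i : ℕ) (2^(i+1)),
      c * ((2:ℝ)^(i+1))⁻¹ ≤ c * ((j:ℝ)+1)⁻¹ := by
    intro j hj
    obtain ⟨_, hj2⟩ := Finset.mem_Ico.mp hj
    apply mul_le_mul_of_nonneg_left _ hc
    have hle : (j:ℝ) + 1 ≤ (2:ℝ)^(i+1) := by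
      have h' : (j+1 : ℕ) ≤ 2^(i+1) := hj2
      exact_mod_cast h'
    have hpos : (0:ℝ) < (j:ℝ) + 1 := by positivity
    exact inv_anti₀ hpos hle
  calc c / 2 = (2^i : ℝ) * (c * ((2:ℝ)^(i+1))⁻¹) := by
        rw [pow_succ]
        have h2i : (2:ℝ)^i ≠ 0 := by positivity
        field_simp
    _ = ((Finset.Ico (2^i : ℕ) (2^(i+1))).card : ℝ) * (c * ((2:ℝ)^(i+1))⁻¹) := by
        rw [hcard]; push_cast; ring
    _ ≤ ∑ j ∈ Finset.Ico (2^i : ℕ) (2^(i+1)), c * ((j:ℝ)+1)⁻¹ := by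
        rw [← nsmul_eq_mul]
        exact Finset.card_nsmul_le_sum _ _ _ hterm

lemma power_mean (p : ℝ) (hp : 2 ≤ p) (R : ℕ) (f : ℕ → ℝ)
    (hf : ∀ i ∈ Finset.range R, 0 ≤ f i) :
    ∑ i ∈ Finset.range R, f i
      ≤ (∑ i ∈ Finset.range R, f i ^ p) ^ (1/p) * (R:ℝ)^(1 - 1/p) := by
  have hp0 : (0:ℝ) < p := by linarith
  have key := Real.rpow_sum_le_const_mul_sum_rpow (Finset.range R) f (by linarith : (1:ℝ) ≤ p)
  have habs : ∀ i ∈ Finset.range R, |f i| = f i := fun i hi => abs_of_nonneg (hf i hi)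
  rw [Finset.sum_congr rfl habs,
    Finset.sum_congr rfl (fun i hi => by rw [habs i hi] :
      ∀ i ∈ Finset.range R, |f i| ^ p = f i ^ p)] at key
  -- key : (∑ f)^p ≤ (card)^(p-1) * ∑ f^p
  have hS : 0 ≤ ∑ i ∈ Finset.range R, f i := Finset.sum_nonneg hf
  have hSp : 0 ≤ ∑ i ∈ Finset.range R, f i ^ p :=
    Finset.sum_nonneg fun i hi => Real.rpow_nonneg (hf i hi) p
  have h1 : ∑ i ∈ Finset.range R, f i
      = ((∑ i ∈ Finset.range R, f i) ^ p) ^ (1/p) := by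
    rw [← Real.rpow_mul hS, mul_one_div_cancel (ne_of_gt hp0), Real.rpow_one]
  rw [h1]
  calc ((∑ i ∈ Finset.range R, f i) ^ p) ^ (1/p)
      ≤ (((Finset.range R).card : ℝ) ^ (p-1) * ∑ i ∈ Finset.range R, f i ^ p) ^ (1/p) := by
        apply Real.rpow_le_rpow (Real.rpow_nonneg hS p) key (by positivity)
    _ = (((Finset.range R).card : ℝ) ^ (p-1)) ^ (1/p)
        * (∑ i ∈ Finset.range R, f i ^ p) ^ (1/p) := by
        apply Real.mul_rpow (Real.rpow_nonneg (Nat.cast_nonneg _) _) hSp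
    _ = (∑ i ∈ Finset.range R, f i ^ p) ^ (1/p) * (R:ℝ)^(1 - 1/p) := by
        rw [Finset.card_range, ← Real.rpow_mul (by positivity : (0:ℝ) ≤ (R:ℝ))]
        have : (p - 1) * (1/p) = 1 - 1/p := by field_simp
        rw [this, mul_comm]

/-- The core Rademacher diagonal-extraction estimate. -/
lemma core {E F : Type*} [NormedAddCommGroup E] [NormedSpace ℝ E]
    [NormedAddCommGroup F] [NormedSpace ℝ F]
    (P : F → E → ℝ)
    (hP1 : ∀ e : E, IsLinearMap ℝ (fun f : F => P f e))
    (hP2 : ∀ f : F, IsLinearMap ℝ (fun e : E => P f e))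
    (hPle : ∀ (f : F) (e : E), P f e ≤ ‖f‖ * ‖e‖)
    (p K D B c : ℝ) (hp : 2 ≤ p) (hK : 0 < K) (hD : 0 ≤ D) (hB : 0 ≤ B) (hc : 0 ≤ c)
    (R : ℕ) (hR : 1 ≤ R)
    (u : ℕ → E) (ψ : ℕ → F)
    (hdiag : ∀ j ∈ Finset.Ico 1 (2^R), P (ψ j) (u j) = c * ((j:ℝ)+1)⁻¹)
    (hcapψ : ∀ i, i < R → ∀ β : ℕ → ℝ, (∀ j, |β j| ≤ 1) →
      ‖∑ j ∈ Finset.Ico (2^i) (2^(i+1)), β j • ψ j‖ ≤ B)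
    (hcapu : ∀ β : ℕ → ℝ, (∀ j, |β j| ≤ 1) →
      ‖∑ j ∈ Finset.Ico 1 (2^R), β j • u j‖ ≤ D)
    (hcot : ∀ W : Fin R → E,
      (2:ℝ)^R * ∑ i, ‖W i‖ ^ p ≤ K * ∑ δ : Fin R → Bool, ‖∑ i, rsign (δ i) • W i‖ ^ p) :
    c * R / 2 ≤ B * (K ^ (1/p) * D) * (R:ℝ)^(1 - 1/p) := by
  classical
  set m := 2^R with hm
  have hGlt : ∀ i, i < R → ∀ j ∈ Finset.Ico (2^i) (2^(i+1)), j < m := by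
    intro i hi j hj
    have h2 := (Finset.mem_Ico.mp hj).2
    have : (2:ℕ)^(i+1) ≤ 2^R := Nat.pow_le_pow_right (by norm_num) hi
    omega
  have hGsub : ∀ i, i < R → Finset.Ico (2^i) (2^(i+1)) ⊆ Finset.Ico 1 m := by
    intro i hi j hj
    have h1 := (Finset.mem_Ico.mp hj).1
    have h2 := hGlt i hi j hj
    refine Finset.mem_Ico.mpr ⟨?_, h2⟩
    have : (1:ℕ) ≤ 2^i := Nat.one_le_two_pow
    omega
  -- the block sums
  set W : ℕ → (Fin m → Bool) → E :=
    fun i ε => ∑ j ∈ Finset.Ico (2^i) (2^(i+1)), sgnf ε j • u j with hW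
  set Θ : ℕ → (Fin m → Bool) → F :=
    fun i ε => ∑ j ∈ Finset.Ico (2^i) (2^(i+1)), sgnf ε j • ψ j with hΘ
  -- Step 1 : diagonal identity
  have diag : ∀ i, i < R →
      ∑ ε : Fin m → Bool, P (Θ i ε) (W i ε)
        = (2:ℝ)^m * ∑ j ∈ Finset.Ico (2^i : ℕ) (2^(i+1)), (c * ((j:ℝ)+1)⁻¹) := by
    intro i hi
    have expand : ∀ ε : Fin m → Bool,
        P (Θ i ε) (W i ε)
          = ∑ a ∈ Finset.Ico (2^i) (2^(i+1)), ∑ b ∈ Finset.Ico (2^i) (2^(i+1)),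
              (sgnf ε a * sgnf ε b) * P (ψ a) (u b) := by
      intro ε
      have e1 : P (Θ i ε) (W i ε)
          = ∑ a ∈ Finset.Ico (2^i) (2^(i+1)), sgnf ε a * P (ψ a) (W i ε) := by
        have hmap := _root_.map_sum (IsLinearMap.mk' _ (hP1 (W i ε)))
          (fun a => sgnf ε a • ψ a) (Finset.Ico (2^i) (2^(i+1)))
        simp only [IsLinearMap.mk'_apply] at hmap
        calc P (Θ i ε) (W i ε)
            = ∑ a ∈ Finset.Ico (2^i) (2^(i+1)), P (sgnf ε a • ψ a) (W i ε) := hmap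
          _ = ∑ a ∈ Finset.Ico (2^i) (2^(i+1)), sgnf ε a * P (ψ a) (W i ε) :=
            Finset.sum_congr rfl fun a _ => by
              simpa [smul_eq_mul] using (hP1 (W i ε)).map_smul (sgnf ε a) (ψ a)
      rw [e1]
      refine Finset.sum_congr rfl fun a _ => ?_
      have e2 : P (ψ a) (W i ε)
          = ∑ b ∈ Finset.Ico (2^i) (2^(i+1)), sgnf ε b * P (ψ a) (u b) := by
        have hmap := _root_.map_sum (IsLinearMap.mk' _ (hP2 (ψ a)))
          (fun b => sgnf ε b • u b) (Finset.Ico (2^i) (2^(i+1)))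
        simp only [IsLinearMap.mk'_apply] at hmap
        calc P (ψ a) (W i ε)
            = ∑ b ∈ Finset.Ico (2^i) (2^(i+1)), P (ψ a) (sgnf ε b • u b) := hmap
          _ = ∑ b ∈ Finset.Ico (2^i) (2^(i+1)), sgnf ε b * P (ψ a) (u b) :=
            Finset.sum_congr rfl fun b _ => by
              simpa [smul_eq_mul] using (hP2 (ψ a)).map_smul (sgnf ε b) (u b)
      rw [e2, Finset.mul_sum]
      refine Finset.sum_congr rfl fun b _ => ?_
      ring
    calc ∑ ε : Fin m → Bool, P (Θ i ε) (W i ε)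
        = ∑ ε : Fin m → Bool, ∑ a ∈ Finset.Ico (2^i) (2^(i+1)),
            ∑ b ∈ Finset.Ico (2^i) (2^(i+1)), (sgnf ε a * sgnf ε b) * P (ψ a) (u b) :=
          Finset.sum_congr rfl fun ε _ => expand ε
      _ = ∑ a ∈ Finset.Ico (2^i) (2^(i+1)), ∑ ε : Fin m → Bool,
            ∑ b ∈ Finset.Ico (2^i) (2^(i+1)), (sgnf ε a * sgnf ε b) * P (ψ a) (u b) :=
          Finset.sum_comm
      _ = ∑ a ∈ Finset.Ico (2^i) (2^(i+1)), ∑ b ∈ Finset.Ico (2^i) (2^(i+1)),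
            ∑ ε : Fin m → Bool, (sgnf ε a * sgnf ε b) * P (ψ a) (u b) := by
          exact Finset.sum_congr rfl fun a _ => Finset.sum_comm
      _ = ∑ a ∈ Finset.Ico (2^i) (2^(i+1)), ∑ b ∈ Finset.Ico (2^i) (2^(i+1)),
            (if a = b then (2:ℝ)^m else 0) * P (ψ a) (u b) := by
          refine Finset.sum_congr rfl fun a ha => Finset.sum_congr rfl fun b hb => ?_
          rw [← Finset.sum_mul, sum_sgnf_mul (hGlt i hi a ha) (hGlt i hi b hb)]
      _ = ∑ a ∈ Finset.Ico (2^i) (2^(i+1)), (2:ℝ)^m * P (ψ a) (u a) := by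
          refine Finset.sum_congr rfl fun a ha => ?_
          have hsplit : ∀ b ∈ Finset.Ico (2^i) (2^(i+1)),
              (if a = b then (2:ℝ)^m else 0) * P (ψ a) (u b)
                = if a = b then (2:ℝ)^m * P (ψ a) (u b) else 0 := by
            intro b _
            split <;> simp
          rw [Finset.sum_congr rfl hsplit, Finset.sum_ite_eq, if_pos ha]
      _ = (2:ℝ)^m * ∑ j ∈ Finset.Ico (2^i : ℕ) (2^(i+1)), (c * ((j:ℝ)+1)⁻¹) := by
          rw [Finset.mul_sum]
          refine Finset.sum_congr rfl fun a ha => ?_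
          rw [hdiag a (hGsub i hi ha)]
  -- Step 2 : lower bound
  have lower : (R:ℝ) * ((2:ℝ)^m * (c/2))
      ≤ ∑ i ∈ Finset.range R, ∑ ε : Fin m → Bool, P (Θ i ε) (W i ε) := by
    calc (R:ℝ) * ((2:ℝ)^m * (c/2))
        = ∑ _i ∈ Finset.range R, (2:ℝ)^m * (c/2) := by
          rw [Finset.sum_const, Finset.card_range, nsmul_eq_mul]
      _ ≤ ∑ i ∈ Finset.range R, ∑ ε : Fin m → Bool, P (Θ i ε) (W i ε) := by
          refine Finset.sum_le_sum fun i hi => ?_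
          rw [diag i (Finset.mem_range.mp hi)]
          exact mul_le_mul_of_nonneg_left (harmonic_block_lower c hc i) (by positivity)
  -- Step 3 : pointwise upper bound
  have upper_each : ∀ ε : Fin m → Bool,
      ∑ i ∈ Finset.range R, P (Θ i ε) (W i ε)
        ≤ B * (K ^ (1/p) * D) * (R:ℝ)^(1 - 1/p) := by
    intro ε
    -- cotype estimate
    have hWsum : ∑ i ∈ Finset.range R, ‖W i ε‖ ^ p ≤ K * D^p := by
      have h1 := hcot (fun i : Fin R => W i.val ε)
      have h2 : ∀ δ : Fin R → Bool, ‖∑ i : Fin R, rsign (δ i) • W i.val ε‖ ≤ D := by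
        intro δ
        have hrw : ∑ i : Fin R, rsign (δ i) • W i.val ε
            = ∑ j ∈ Finset.Ico 1 (2^R), (sgnf δ (Nat.log 2 j) * sgnf ε j) • u j := by
          have e1 : ∀ i : Fin R, rsign (δ i) • W i.val ε
              = ∑ j ∈ Finset.Ico (2^i.val) (2^(i.val+1)), (sgnf δ i.val * sgnf ε j) • u j := by
            intro i
            rw [hW, Finset.smul_sum]
            refine Finset.sum_congr rfl fun j _ => ?_
            rw [smul_smul, sgnf_eq δ i.val i.isLt]
          calc ∑ i : Fin R, rsign (δ i) • W i.val ε
              = ∑ i : Fin R,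
                  ∑ j ∈ Finset.Ico (2^i.val) (2^(i.val+1)), (sgnf δ i.val * sgnf ε j) • u j :=
                Finset.sum_congr rfl fun i _ => e1 i
            _ = ∑ i ∈ Finset.range R,
                  ∑ j ∈ Finset.Ico (2^i) (2^(i+1)), (sgnf δ i * sgnf ε j) • u j :=
                Fin.sum_univ_eq_sum_range
                  (fun i => ∑ j ∈ Finset.Ico (2^i) (2^(i+1)), (sgnf δ i * sgnf ε j) • u j) R
            _ = ∑ i ∈ Finset.range R,
                  ∑ j ∈ Finset.Ico (2^i) (2^(i+1)),
                    (sgnf δ (Nat.log 2 j) * sgnf ε j) • u j := by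
                refine Finset.sum_congr rfl fun i _ => Finset.sum_congr rfl fun j hj => ?_
                obtain ⟨hj1, hj2⟩ := Finset.mem_Ico.mp hj
                rw [Nat.log_eq_of_pow_le_of_lt_pow hj1 hj2]
            _ = ∑ j ∈ Finset.Ico 1 (2^R), (sgnf δ (Nat.log 2 j) * sgnf ε j) • u j :=
                dyadic_partition _ R
        rw [hrw]
        refine hcapu _ fun j => ?_
        rw [abs_mul]
        calc |sgnf δ (Nat.log 2 j)| * |sgnf ε j| ≤ 1 * 1 :=
              mul_le_mul (abs_sgnf _ _) (abs_sgnf _ _) (abs_nonneg _) zero_le_one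
          _ = 1 := one_mul 1
      have h3 : ∑ δ : Fin R → Bool, ‖∑ i : Fin R, rsign (δ i) • W i.val ε‖ ^ p
          ≤ (2:ℝ)^R * D^p := by
        calc ∑ δ : Fin R → Bool, ‖∑ i : Fin R, rsign (δ i) • W i.val ε‖ ^ p
            ≤ ∑ _δ : Fin R → Bool, D^p :=
              Finset.sum_le_sum fun δ _ =>
                Real.rpow_le_rpow (norm_nonneg _) (h2 δ) (by linarith)
          _ = (2:ℝ)^R * D^p := by
              rw [Finset.sum_const, Finset.card_univ, Fintype.card_fun,
                Fintype.card_bool, Fintype.card_fin, nsmul_eq_mul]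
              push_cast
              ring
      have h4 : (2:ℝ)^R * ∑ i : Fin R, ‖W i.val ε‖ ^ p ≤ (2:ℝ)^R * (K * D^p) := by
        calc (2:ℝ)^R * ∑ i : Fin R, ‖W i.val ε‖ ^ p
            ≤ K * ∑ δ : Fin R → Bool, ‖∑ i : Fin R, rsign (δ i) • W i.val ε‖ ^ p := h1
          _ ≤ K * ((2:ℝ)^R * D^p) := mul_le_mul_of_nonneg_left h3 hK.le
          _ = (2:ℝ)^R * (K * D^p) := by ring
      have h5 : ∑ i : Fin R, ‖W i.val ε‖ ^ p ≤ K * D^p :=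
        le_of_mul_le_mul_left h4 (by positivity)
      calc ∑ i ∈ Finset.range R, ‖W i ε‖ ^ p
          = ∑ i : Fin R, ‖W i.val ε‖ ^ p :=
            (Fin.sum_univ_eq_sum_range (fun i => ‖W i ε‖ ^ p) R).symm
        _ ≤ K * D^p := h5
    -- Hölder / power-mean
    have hH : ∑ i ∈ Finset.range R, ‖W i ε‖ ≤ (K * D^p)^(1/p) * (R:ℝ)^(1 - 1/p) := by
      calc ∑ i ∈ Finset.range R, ‖W i ε‖
          ≤ (∑ i ∈ Finset.range R, ‖W i ε‖ ^ p) ^ (1/p) * (R:ℝ)^(1 - 1/p) :=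
            power_mean p hp R _ (fun i _ => norm_nonneg _)
        _ ≤ (K * D^p)^(1/p) * (R:ℝ)^(1 - 1/p) := by
            apply mul_le_mul_of_nonneg_right _ (by positivity)
            apply Real.rpow_le_rpow (Finset.sum_nonneg fun i _ =>
              Real.rpow_nonneg (norm_nonneg _) p) hWsum (by positivity)
    have hKD : (K * D^p)^(1/p) = K^(1/p) * D := by
      rw [Real.mul_rpow hK.le (Real.rpow_nonneg hD p), ← Real.rpow_mul hD,
        mul_one_div_cancel (by positivity : p ≠ 0), Real.rpow_one]
    calc ∑ i ∈ Finset.range R, P (Θ i ε) (W i ε)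
        ≤ ∑ i ∈ Finset.range R, ‖Θ i ε‖ * ‖W i ε‖ :=
          Finset.sum_le_sum fun i _ => hPle _ _
      _ ≤ ∑ i ∈ Finset.range R, B * ‖W i ε‖ :=
          Finset.sum_le_sum fun i hi =>
            mul_le_mul_of_nonneg_right
              (hcapψ i (Finset.mem_range.mp hi) (sgnf ε) (abs_sgnf ε)) (norm_nonneg _)
      _ = B * ∑ i ∈ Finset.range R, ‖W i ε‖ := (Finset.mul_sum _ _ _).symm
      _ ≤ B * ((K * D^p)^(1/p) * (R:ℝ)^(1 - 1/p)) := mul_le_mul_of_nonneg_left hH hB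
      _ = B * (K ^ (1/p) * D) * (R:ℝ)^(1 - 1/p) := by rw [hKD]; ring
  -- Step 4 : combine
  have upper : ∑ i ∈ Finset.range R, ∑ ε : Fin m → Bool, P (Θ i ε) (W i ε)
      ≤ (2:ℝ)^m * (B * (K ^ (1/p) * D) * (R:ℝ)^(1 - 1/p)) := by
    rw [Finset.sum_comm]
    calc ∑ ε : Fin m → Bool, ∑ i ∈ Finset.range R, P (Θ i ε) (W i ε)
        ≤ ∑ _ε : Fin m → Bool, B * (K ^ (1/p) * D) * (R:ℝ)^(1 - 1/p) :=
          Finset.sum_le_sum fun ε _ => upper_each ε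
      _ = (2:ℝ)^m * (B * (K ^ (1/p) * D) * (R:ℝ)^(1 - 1/p)) := by
          rw [Finset.sum_const, Finset.card_univ, Fintype.card_fun,
            Fintype.card_bool, Fintype.card_fin, nsmul_eq_mul]
          push_cast
          ring
  have final := le_trans lower upper
  have h2m : (0:ℝ) < (2:ℝ)^m := by positivity
  have : (2:ℝ)^m * (c * R / 2) ≤ (2:ℝ)^m * (B * (K ^ (1/p) * D) * (R:ℝ)^(1 - 1/p)) := by
    calc (2:ℝ)^m * (c * R / 2) = (R:ℝ) * ((2:ℝ)^m * (c/2)) := by ring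
      _ ≤ _ := final
  exact le_of_mul_le_mul_left this h2m

section Branches

variable {X : Type} [NormedAddCommGroup X] [NormedSpace ℂ X]

lemma window_sum {T : X →L[ℂ] X} {C : ℝ}
    (hces : ∀ n : ℕ, 1 ≤ n → ∀ x : X, ∀ φ : StrongDual ℂ X,
      ∑ k ∈ Finset.range n, ‖φ ((T ^ k) x)‖ ≤ C * n * ‖φ‖ * ‖x‖)
    (N : ℕ) (hN : 1 ≤ N) (s : Finset ℕ) (e : ℕ → ℕ)
    (he : ∀ a ∈ s, ∀ b ∈ s, e a = e b → a = b) (heN : ∀ j ∈ s, e j < N)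
    (g : StrongDual ℂ X) (y : X) :
    ∑ j ∈ s, ‖g ((T ^ (e j)) y)‖ ≤ C * N * ‖g‖ * ‖y‖ := by
  have h1 : ∑ l ∈ s.image e, ‖g ((T ^ l) y)‖ = ∑ j ∈ s, ‖g ((T ^ (e j)) y)‖ :=
    Finset.sum_image he
  rw [← h1]
  have h2 : s.image e ⊆ Finset.range N := fun l hl => by
    obtain ⟨j, hj, rfl⟩ := Finset.mem_image.mp hl
    exact Finset.mem_range.mpr (heN j hj)
  calc ∑ l ∈ s.image e, ‖g ((T ^ l) y)‖
      ≤ ∑ l ∈ Finset.range N, ‖g ((T ^ l) y)‖ :=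
        Finset.sum_le_sum_of_subset_of_nonneg h2 (fun _ _ _ => norm_nonneg _)
    _ ≤ C * N * ‖g‖ * ‖y‖ := hces N hN y g

lemma capV {T : X →L[ℂ] X} {C : ℝ} (hC : 0 < C)
    (hces : ∀ n : ℕ, 1 ≤ n → ∀ x : X, ∀ φ : StrongDual ℂ X,
      ∑ k ∈ Finset.range n, ‖φ ((T ^ k) x)‖ ≤ C * n * ‖φ‖ * ‖x‖)
    (N : ℕ) (hN : 1 ≤ N) (s : Finset ℕ) (e : ℕ → ℕ)
    (he : ∀ a ∈ s, ∀ b ∈ s, e a = e b → a = b) (heN : ∀ j ∈ s, e j < N)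
    (γ : ℝ) (hγ : 0 ≤ γ) (β : ℕ → ℝ) (hβ : ∀ j ∈ s, |β j| ≤ γ) (y : X) :
    ‖∑ j ∈ s, β j • (T ^ (e j)) y‖ ≤ γ * (C * N * ‖y‖) := by
  rcases eq_or_ne (∑ j ∈ s, β j • (T ^ (e j)) y) 0 with h0 | h0
  · rw [h0, norm_zero]; positivity
  obtain ⟨g, hg1, hgz⟩ := exists_dual_vector ℂ _ (norm_ne_zero_iff.mpr h0)
  have hgz' : g (∑ j ∈ s, β j • (T ^ (e j)) y)
      = ((‖∑ j ∈ s, β j • (T ^ (e j)) y‖ : ℝ) : ℂ) := hgz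
  have hz : ‖∑ j ∈ s, β j • (T ^ (e j)) y‖
      = (g (∑ j ∈ s, β j • (T ^ (e j)) y)).re := by
    rw [hgz', Complex.ofReal_re]
  rw [hz]
  have hexp : (g (∑ j ∈ s, β j • (T ^ (e j)) y)).re
      = ∑ j ∈ s, β j * (g ((T ^ (e j)) y)).re := by
    rw [map_sum, Complex.re_sum]
    refine Finset.sum_congr rfl fun j _ => ?_
    rw [ContinuousLinearMap.map_smul_of_tower, Complex.smul_re, smul_eq_mul]
  rw [hexp]
  have hw := window_sum hces N hN s e he heN g y
  rw [hg1] at hw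
  calc ∑ j ∈ s, β j * (g ((T ^ (e j)) y)).re
      ≤ ∑ j ∈ s, γ * ‖g ((T ^ (e j)) y)‖ := by
        refine Finset.sum_le_sum fun j hj => ?_
        calc β j * (g ((T ^ (e j)) y)).re
            ≤ |β j * (g ((T ^ (e j)) y)).re| := le_abs_self _
          _ = |β j| * |(g ((T ^ (e j)) y)).re| := abs_mul _ _
          _ ≤ γ * ‖g ((T ^ (e j)) y)‖ := by
              apply mul_le_mul (hβ j hj) ?_ (abs_nonneg _) hγ
              exact Complex.abs_re_le_norm _
    _ = γ * ∑ j ∈ s, ‖g ((T ^ (e j)) y)‖ := (Finset.mul_sum _ _ _).symm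
    _ ≤ γ * (C * N * ‖y‖) := by
        apply mul_le_mul_of_nonneg_left _ hγ
        calc ∑ j ∈ s, ‖g ((T ^ (e j)) y)‖ ≤ C * N * 1 * ‖y‖ := hw
          _ = C * N * ‖y‖ := by ring

lemma capD {T : X →L[ℂ] X} {C : ℝ} (hC : 0 < C)
    (hces : ∀ n : ℕ, 1 ≤ n → ∀ x : X, ∀ φ : StrongDual ℂ X,
      ∑ k ∈ Finset.range n, ‖φ ((T ^ k) x)‖ ≤ C * n * ‖φ‖ * ‖x‖)
    (N : ℕ) (hN : 1 ≤ N) (s : Finset ℕ) (e : ℕ → ℕ)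
    (he : ∀ a ∈ s, ∀ b ∈ s, e a = e b → a = b) (heN : ∀ j ∈ s, e j < N)
    (γ : ℝ) (hγ : 0 ≤ γ) (β : ℕ → ℝ) (hβ : ∀ j ∈ s, |β j| ≤ γ)
    (φ : StrongDual ℂ X) :
    ‖∑ j ∈ s, β j • (φ.comp (T ^ (e j)))‖ ≤ γ * (C * N * ‖φ‖) := by
  apply ContinuousLinearMap.opNorm_le_bound _ (by positivity)
  intro x'
  have happ : (∑ j ∈ s, β j • (φ.comp (T ^ (e j)))) x'
      = ∑ j ∈ s, β j • (φ ((T ^ (e j)) x')) := by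
    rw [ContinuousLinearMap.sum_apply]
    exact Finset.sum_congr rfl fun j _ => rfl
  rw [happ]
  calc ‖∑ j ∈ s, β j • (φ ((T ^ (e j)) x'))‖
      ≤ ∑ j ∈ s, ‖β j • (φ ((T ^ (e j)) x'))‖ := norm_sum_le _ _
    _ = ∑ j ∈ s, |β j| * ‖φ ((T ^ (e j)) x')‖ := by
        refine Finset.sum_congr rfl fun j _ => ?_
        rw [norm_smul, Real.norm_eq_abs]
    _ ≤ ∑ j ∈ s, γ * ‖φ ((T ^ (e j)) x')‖ :=
        Finset.sum_le_sum fun j hj =>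
          mul_le_mul_of_nonneg_right (hβ j hj) (norm_nonneg _)
    _ = γ * ∑ j ∈ s, ‖φ ((T ^ (e j)) x')‖ := (Finset.mul_sum _ _ _).symm
    _ ≤ γ * (C * N * ‖φ‖ * ‖x'‖) :=
        mul_le_mul_of_nonneg_left (window_sum hces N hN s e he heN φ x') hγ
    _ = γ * (C * N * ‖φ‖) * ‖x'‖ := by ring

lemma branch_primal
    (q C K₁ : ℝ) (hq : 2 ≤ q) (hC : 0 < C) (hK₁ : 0 < K₁)
    (T : X →L[ℂ] X)
    (hces : ∀ n : ℕ, 1 ≤ n → ∀ x : X, ∀ φ : StrongDual ℂ X,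
      ∑ k ∈ Finset.range n, ‖φ ((T ^ k) x)‖ ≤ C * n * ‖φ‖ * ‖x‖)
    (hcot : ∀ n : ℕ, ∀ x : Fin n → X,
      2 ^ n * ∑ i, ‖x i‖ ^ q ≤ K₁ * ∑ ε : Fin n → Bool, ‖∑ i, rsign (ε i) • x i‖ ^ q)
    (n R : ℕ) (hR : 1 ≤ R) (hRn : 2^R ≤ n) :
    ‖T ^ n‖ * (R:ℝ)^(1/q) ≤ 8*C^2*K₁^(1/q) * ((n:ℝ)+1) := by
  rcases eq_or_lt_of_le (norm_nonneg (T^n)) with h0 | hM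
  · rw [← h0, zero_mul]; positivity
  -- choose a unit vector almost attaining the norm
  have hhalf : ¬ (∀ y : X, ‖(T^n) y‖ ≤ (‖T^n‖/2) * ‖y‖) := by
    intro hall
    have h1 := ContinuousLinearMap.opNorm_le_bound (T^n) (by positivity) hall
    linarith
  push_neg at hhalf
  obtain ⟨x₀, hx₀⟩ := hhalf
  have hx₀pos : 0 < ‖x₀‖ := by
    rcases eq_or_ne x₀ 0 with rfl | hne
    · simp at hx₀
    · exact norm_pos_iff.mpr hne
  set x : X := (‖x₀‖⁻¹ : ℝ) • x₀ with hxdef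
  have hxnorm : ‖x‖ = 1 := by
    rw [hxdef, norm_smul, Real.norm_eq_abs, abs_of_pos (inv_pos.mpr hx₀pos)]
    field_simp
  have hTx : ‖T^n‖/2 ≤ ‖(T^n) x‖ := by
    have h1 : (T^n) x = (‖x₀‖⁻¹ : ℝ) • ((T^n) x₀) := by
      rw [hxdef]; exact (T^n).map_smul_of_tower _ _
    rw [h1, norm_smul, Real.norm_eq_abs, abs_of_pos (inv_pos.mpr hx₀pos)]
    have h2 : (‖T^n‖/2) * ‖x₀‖ ≤ ‖(T^n) x₀‖ := le_of_lt hx₀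
    calc ‖T^n‖/2 = ‖x₀‖⁻¹ * ((‖T^n‖/2) * ‖x₀‖) := by field_simp
      _ ≤ ‖x₀‖⁻¹ * ‖(T^n) x₀‖ := mul_le_mul_of_nonneg_left h2 (by positivity)
  have hTxne : (T^n) x ≠ 0 := by
    intro h
    rw [h, norm_zero] at hTx
    linarith
  obtain ⟨φ, hφ1, hφx0⟩ := exists_dual_vector ℂ ((T^n) x) (norm_ne_zero_iff.mpr hTxne)
  have hφx : φ ((T^n) x) = ((‖(T^n) x‖ : ℝ) : ℂ) := hφx0
  -- linearity facts for the pairing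
  have hP1 : ∀ e : X, IsLinearMap ℝ (fun f : StrongDual ℂ X => (f e).re) := by
    intro e
    constructor
    · intro f g; simp
    · intro r f
      simp [ContinuousLinearMap.smul_apply, Complex.smul_re]
  have hP2 : ∀ f : StrongDual ℂ X, IsLinearMap ℝ (fun e : X => (f e).re) := by
    intro f
    constructor
    · intro e e'; simp
    · intro r e
      simp [ContinuousLinearMap.map_smul_of_tower, Complex.smul_re]
  have hPle : ∀ (f : StrongDual ℂ X) (e : X), (f e).re ≤ ‖f‖ * ‖e‖ := by
    intro f e
    calc (f e).re ≤ ‖f e‖ := Complex.re_le_norm _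
      _ ≤ ‖f‖ * ‖e‖ := f.le_opNorm e
  set c := ‖(T^n) x‖ with hcdef
  have hdiag : ∀ j ∈ Finset.Ico (1:ℕ) (2^R),
      (((((j:ℝ)+1)⁻¹ • (φ.comp (T^j))) ((T^(n-j)) x))).re = c * ((j:ℝ)+1)⁻¹ := by
    intro j hj
    obtain ⟨hj1, hj2⟩ := Finset.mem_Ico.mp hj
    have hjn : j ≤ n := le_trans (le_of_lt hj2) hRn
    have hTT : (T^j) ((T^(n-j)) x) = (T^n) x := by
      have hjn' : j + (n - j) = n := by omega
      rw [← ContinuousLinearMap.mul_apply, ← pow_add, hjn']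
    rw [ContinuousLinearMap.smul_apply, ContinuousLinearMap.comp_apply, hTT, hφx,
      Complex.smul_re, Complex.ofReal_re, smul_eq_mul]
    ring
  have hcapψ : ∀ i, i < R → ∀ β : ℕ → ℝ, (∀ j, |β j| ≤ 1) →
      ‖∑ j ∈ Finset.Ico (2^i : ℕ) (2^(i+1)),
          β j • (((j:ℝ)+1)⁻¹ • (φ.comp (T^j)))‖ ≤ 2*C := by
    intro i hi β hβ
    have hcomb : ∀ j ∈ Finset.Ico (2^i : ℕ) (2^(i+1)),
        β j • (((j:ℝ)+1)⁻¹ • (φ.comp (T^j)))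
          = (β j * ((j:ℝ)+1)⁻¹) • (φ.comp (T^j)) := fun j _ => smul_smul _ _ _
    rw [Finset.sum_congr rfl hcomb]
    have hcoeff : ∀ j ∈ Finset.Ico (2^i : ℕ) (2^(i+1)),
        |β j * ((j:ℝ)+1)⁻¹| ≤ ((2:ℝ)^i)⁻¹ := by
      intro j hj
      obtain ⟨hj1, _⟩ := Finset.mem_Ico.mp hj
      have h1 : ((2:ℝ)^i) ≤ (j:ℝ)+1 := by
        have h' : ((2^i : ℕ):ℝ) ≤ (j:ℝ) := Nat.cast_le.mpr hj1
        push_cast at h'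
        linarith
      calc |β j * ((j:ℝ)+1)⁻¹| = |β j| * |((j:ℝ)+1)⁻¹| := abs_mul _ _
        _ ≤ 1 * ((j:ℝ)+1)⁻¹ := by
            apply mul_le_mul (hβ j) (le_of_eq (abs_of_pos (by positivity)))
              (abs_nonneg _) zero_le_one
        _ ≤ ((2:ℝ)^i)⁻¹ := by
            rw [one_mul]
            exact inv_anti₀ (by positivity) h1
    have hcap := capD hC hces (2^(i+1)) Nat.one_le_two_pow
      (Finset.Ico (2^i : ℕ) (2^(i+1))) (fun j => j)
      (fun a _ b _ h => h) (fun j hj => (Finset.mem_Ico.mp hj).2)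
      (((2:ℝ)^i)⁻¹) (by positivity) (fun j => β j * ((j:ℝ)+1)⁻¹) hcoeff φ
    calc ‖∑ j ∈ Finset.Ico (2^i : ℕ) (2^(i+1)), (β j * ((j:ℝ)+1)⁻¹) • (φ.comp (T^j))‖
        ≤ ((2:ℝ)^i)⁻¹ * (C * ((2^(i+1) : ℕ):ℝ) * ‖φ‖) := hcap
      _ = 2*C := by
          rw [hφ1]
          push_cast
          rw [pow_succ]
          have h2i : ((2:ℝ)^i) ≠ 0 := by positivity
          field_simp
  have hcapu : ∀ β : ℕ → ℝ, (∀ j, |β j| ≤ 1) →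
      ‖∑ j ∈ Finset.Ico 1 (2^R), β j • (T^(n-j)) x‖ ≤ C * ((n:ℝ)+1) := by
    intro β hβ
    have hinj : ∀ a ∈ Finset.Ico 1 (2^R), ∀ b ∈ Finset.Ico 1 (2^R),
        n - a = n - b → a = b := by
      intro a ha b hb hab
      have ha' := Finset.mem_Ico.mp ha
      have hb' := Finset.mem_Ico.mp hb
      omega
    have hcap := capV hC hces (n+1) (by omega) (Finset.Ico 1 (2^R)) (fun j => n - j)
      hinj (fun j _ => by show n - j < n + 1; omega) 1 zero_le_one β (fun j _ => hβ j) x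
    calc ‖∑ j ∈ Finset.Ico 1 (2^R), β j • (T^(n-j)) x‖
        ≤ 1 * (C * (((n+1 : ℕ)):ℝ) * ‖x‖) := hcap
      _ = C * ((n:ℝ)+1) := by rw [hxnorm]; push_cast; ring
  have key := core (fun f e => (f e).re) hP1 hP2 hPle q K₁ (C*((n:ℝ)+1)) (2*C) c hq hK₁
    (by positivity) (by positivity) (norm_nonneg _) R hR
    (fun j => (T^(n-j)) x) (fun j => ((j:ℝ)+1)⁻¹ • (φ.comp (T^j)))
    hdiag hcapψ hcapu (fun W => hcot R W)
  -- conclude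
  have hMc : ‖T^n‖ ≤ 2*c := by rw [hcdef]; linarith
  have hRpos : (0:ℝ) < (R:ℝ) := by
    have : (0:ℕ) < R := hR
    exact_mod_cast this
  have hMR : ‖T^n‖ * (R:ℝ) ≤ (8*C^2*K₁^(1/q) * ((n:ℝ)+1)) * (R:ℝ)^(1-1/q) := by
    calc ‖T^n‖ * (R:ℝ) ≤ 2*c*(R:ℝ) :=
          mul_le_mul_of_nonneg_right hMc (le_of_lt hRpos)
      _ = 4 * (c * (R:ℝ) / 2) := by ring
      _ ≤ 4 * (2*C * (K₁^(1/q) * (C*((n:ℝ)+1))) * (R:ℝ)^(1-1/q)) := by linarith [key]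
      _ = (8*C^2*K₁^(1/q) * ((n:ℝ)+1)) * (R:ℝ)^(1-1/q) := by ring
  have hpw : (0:ℝ) < (R:ℝ)^(1-1/q) := Real.rpow_pos_of_pos hRpos _
  have hcancel : (R:ℝ)^(1/q) * (R:ℝ)^(1-1/q) = (R:ℝ) := by
    have hsum : 1/q + (1-1/q) = 1 := by ring
    rw [← Real.rpow_add hRpos, hsum, Real.rpow_one]
  apply le_of_mul_le_mul_right _ hpw
  calc ‖T^n‖ * (R:ℝ)^(1/q) * (R:ℝ)^(1-1/q) = ‖T^n‖ * (R:ℝ) := by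
        rw [mul_assoc, hcancel]
    _ ≤ (8*C^2*K₁^(1/q) * ((n:ℝ)+1)) * (R:ℝ)^(1-1/q) := hMR

lemma branch_dual
    (qs C K₂ : ℝ) (hqs : 2 ≤ qs) (hC : 0 < C) (hK₂ : 0 < K₂)
    (T : X →L[ℂ] X)
    (hces : ∀ n : ℕ, 1 ≤ n → ∀ x : X, ∀ φ : StrongDual ℂ X,
      ∑ k ∈ Finset.range n, ‖φ ((T ^ k) x)‖ ≤ C * n * ‖φ‖ * ‖x‖)
    (hcot : ∀ n : ℕ, ∀ x : Fin n → StrongDual ℂ X,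
      2 ^ n * ∑ i, ‖x i‖ ^ qs
        ≤ K₂ * ∑ ε : Fin n → Bool, ‖∑ i, rsign (ε i) • x i‖ ^ qs)
    (n R : ℕ) (hR : 1 ≤ R) (hRn : 2^R ≤ n) :
    ‖T ^ n‖ * (R:ℝ)^(1/qs) ≤ 8*C^2*K₂^(1/qs) * ((n:ℝ)+1) := by
  rcases eq_or_lt_of_le (norm_nonneg (T^n)) with h0 | hM
  · rw [← h0, zero_mul]; positivity
  have hhalf : ¬ (∀ y : X, ‖(T^n) y‖ ≤ (‖T^n‖/2) * ‖y‖) := by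
    intro hall
    have h1 := ContinuousLinearMap.opNorm_le_bound (T^n) (by positivity) hall
    linarith
  push_neg at hhalf
  obtain ⟨x₀, hx₀⟩ := hhalf
  have hx₀pos : 0 < ‖x₀‖ := by
    rcases eq_or_ne x₀ 0 with rfl | hne
    · simp at hx₀
    · exact norm_pos_iff.mpr hne
  set x : X := (‖x₀‖⁻¹ : ℝ) • x₀ with hxdef
  have hxnorm : ‖x‖ = 1 := by
    rw [hxdef, norm_smul, Real.norm_eq_abs, abs_of_pos (inv_pos.mpr hx₀pos)]
    field_simp
  have hTx : ‖T^n‖/2 ≤ ‖(T^n) x‖ := by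
    have h1 : (T^n) x = (‖x₀‖⁻¹ : ℝ) • ((T^n) x₀) := by
      rw [hxdef]; exact (T^n).map_smul_of_tower _ _
    rw [h1, norm_smul, Real.norm_eq_abs, abs_of_pos (inv_pos.mpr hx₀pos)]
    have h2 : (‖T^n‖/2) * ‖x₀‖ ≤ ‖(T^n) x₀‖ := le_of_lt hx₀
    calc ‖T^n‖/2 = ‖x₀‖⁻¹ * ((‖T^n‖/2) * ‖x₀‖) := by field_simp
      _ ≤ ‖x₀‖⁻¹ * ‖(T^n) x₀‖ := mul_le_mul_of_nonneg_left h2 (by positivity)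
  have hTxne : (T^n) x ≠ 0 := by
    intro h
    rw [h, norm_zero] at hTx
    linarith
  obtain ⟨φ, hφ1, hφx0⟩ := exists_dual_vector ℂ ((T^n) x) (norm_ne_zero_iff.mpr hTxne)
  have hφx : φ ((T^n) x) = ((‖(T^n) x‖ : ℝ) : ℂ) := hφx0
  -- pairing : P (v : X) (f : Dual) := (f v).re
  have hP1 : ∀ e : StrongDual ℂ X, IsLinearMap ℝ (fun v : X => (e v).re) := by
    intro e
    constructor
    · intro v v'; simp
    · intro r v
      simp [ContinuousLinearMap.map_smul_of_tower, Complex.smul_re]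
  have hP2 : ∀ v : X, IsLinearMap ℝ (fun e : StrongDual ℂ X => (e v).re) := by
    intro v
    constructor
    · intro f g; simp
    · intro r f
      simp [ContinuousLinearMap.smul_apply, Complex.smul_re]
  have hPle : ∀ (f : X) (e : StrongDual ℂ X), (e f).re ≤ ‖f‖ * ‖e‖ := by
    intro f e
    calc (e f).re ≤ ‖e f‖ := Complex.re_le_norm _
      _ ≤ ‖e‖ * ‖f‖ := e.le_opNorm f
      _ = ‖f‖ * ‖e‖ := mul_comm _ _
  set c := ‖(T^n) x‖ with hcdef
  have hdiag : ∀ j ∈ Finset.Ico (1:ℕ) (2^R),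
      ((φ.comp (T^(n-j))) (((j:ℝ)+1)⁻¹ • ((T^j) x))).re = c * ((j:ℝ)+1)⁻¹ := by
    intro j hj
    obtain ⟨hj1, hj2⟩ := Finset.mem_Ico.mp hj
    have hjn : j ≤ n := le_trans (le_of_lt hj2) hRn
    have hTT : (T^(n-j)) ((T^j) x) = (T^n) x := by
      have hjn' : (n - j) + j = n := by omega
      rw [← ContinuousLinearMap.mul_apply, ← pow_add, hjn']
    rw [ContinuousLinearMap.map_smul_of_tower, ContinuousLinearMap.comp_apply, hTT, hφx,
      Complex.smul_re, Complex.ofReal_re, smul_eq_mul]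
    ring
  have hcapψ : ∀ i, i < R → ∀ β : ℕ → ℝ, (∀ j, |β j| ≤ 1) →
      ‖∑ j ∈ Finset.Ico (2^i : ℕ) (2^(i+1)),
          β j • (((j:ℝ)+1)⁻¹ • ((T^j) x))‖ ≤ 2*C := by
    intro i hi β hβ
    have hcomb : ∀ j ∈ Finset.Ico (2^i : ℕ) (2^(i+1)),
        β j • (((j:ℝ)+1)⁻¹ • ((T^j) x))
          = (β j * ((j:ℝ)+1)⁻¹) • ((T^j) x) := fun j _ => smul_smul _ _ _
    rw [Finset.sum_congr rfl hcomb]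
    have hcoeff : ∀ j ∈ Finset.Ico (2^i : ℕ) (2^(i+1)),
        |β j * ((j:ℝ)+1)⁻¹| ≤ ((2:ℝ)^i)⁻¹ := by
      intro j hj
      obtain ⟨hj1, _⟩ := Finset.mem_Ico.mp hj
      have h1 : ((2:ℝ)^i) ≤ (j:ℝ)+1 := by
        have h' : ((2^i : ℕ):ℝ) ≤ (j:ℝ) := Nat.cast_le.mpr hj1
        push_cast at h'
        linarith
      calc |β j * ((j:ℝ)+1)⁻¹| = |β j| * |((j:ℝ)+1)⁻¹| := abs_mul _ _
        _ ≤ 1 * ((j:ℝ)+1)⁻¹ := by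
            apply mul_le_mul (hβ j) (le_of_eq (abs_of_pos (by positivity)))
              (abs_nonneg _) zero_le_one
        _ ≤ ((2:ℝ)^i)⁻¹ := by
            rw [one_mul]
            exact inv_anti₀ (by positivity) h1
    have hcap := capV hC hces (2^(i+1)) Nat.one_le_two_pow
      (Finset.Ico (2^i : ℕ) (2^(i+1))) (fun j => j)
      (fun a _ b _ h => h) (fun j hj => (Finset.mem_Ico.mp hj).2)
      (((2:ℝ)^i)⁻¹) (by positivity) (fun j => β j * ((j:ℝ)+1)⁻¹) hcoeff x
    calc ‖∑ j ∈ Finset.Ico (2^i : ℕ) (2^(i+1)), (β j * ((j:ℝ)+1)⁻¹) • ((T^j) x)‖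
        ≤ ((2:ℝ)^i)⁻¹ * (C * ((2^(i+1) : ℕ):ℝ) * ‖x‖) := hcap
      _ = 2*C := by
          rw [hxnorm]
          push_cast
          rw [pow_succ]
          have h2i : ((2:ℝ)^i) ≠ 0 := by positivity
          field_simp
  have hcapu : ∀ β : ℕ → ℝ, (∀ j, |β j| ≤ 1) →
      ‖∑ j ∈ Finset.Ico 1 (2^R), β j • (φ.comp (T^(n-j)))‖ ≤ C * ((n:ℝ)+1) := by
    intro β hβ
    have hinj : ∀ a ∈ Finset.Ico 1 (2^R), ∀ b ∈ Finset.Ico 1 (2^R),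
        n - a = n - b → a = b := by
      intro a ha b hb hab
      have ha' := Finset.mem_Ico.mp ha
      have hb' := Finset.mem_Ico.mp hb
      omega
    have hcap := capD hC hces (n+1) (by omega) (Finset.Ico 1 (2^R)) (fun j => n - j)
      hinj (fun j _ => by show n - j < n + 1; omega) 1 zero_le_one β (fun j _ => hβ j) φ
    calc ‖∑ j ∈ Finset.Ico 1 (2^R), β j • (φ.comp (T^(n-j)))‖
        ≤ 1 * (C * (((n+1 : ℕ)):ℝ) * ‖φ‖) := hcap
      _ = C * ((n:ℝ)+1) := by rw [hφ1]; push_cast; ring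
  have key := core (fun (v : X) (e : StrongDual ℂ X) => (e v).re) hP1 hP2 hPle
    qs K₂ (C*((n:ℝ)+1)) (2*C) c hqs hK₂
    (by positivity) (by positivity) (norm_nonneg _) R hR
    (fun j => φ.comp (T^(n-j))) (fun j => ((j:ℝ)+1)⁻¹ • ((T^j) x))
    hdiag hcapψ hcapu (fun W => hcot R W)
  have hMc : ‖T^n‖ ≤ 2*c := by rw [hcdef]; linarith
  have hRpos : (0:ℝ) < (R:ℝ) := by
    have : (0:ℕ) < R := hR
    exact_mod_cast this
  have hMR : ‖T^n‖ * (R:ℝ) ≤ (8*C^2*K₂^(1/qs) * ((n:ℝ)+1)) * (R:ℝ)^(1-1/qs) := by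
    calc ‖T^n‖ * (R:ℝ) ≤ 2*c*(R:ℝ) :=
          mul_le_mul_of_nonneg_right hMc (le_of_lt hRpos)
      _ = 4 * (c * (R:ℝ) / 2) := by ring
      _ ≤ 4 * (2*C * (K₂^(1/qs) * (C*((n:ℝ)+1))) * (R:ℝ)^(1-1/qs)) := by linarith [key]
      _ = (8*C^2*K₂^(1/qs) * ((n:ℝ)+1)) * (R:ℝ)^(1-1/qs) := by ring
  have hpw : (0:ℝ) < (R:ℝ)^(1-1/qs) := Real.rpow_pos_of_pos hRpos _
  have hcancel : (R:ℝ)^(1/qs) * (R:ℝ)^(1-1/qs) = (R:ℝ) := by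
    have hsum : 1/qs + (1-1/qs) = 1 := by ring
    rw [← Real.rpow_add hRpos, hsum, Real.rpow_one]
  apply le_of_mul_le_mul_right _ hpw
  calc ‖T^n‖ * (R:ℝ)^(1/qs) * (R:ℝ)^(1-1/qs) = ‖T^n‖ * (R:ℝ) := by
        rw [mul_assoc, hcancel]
    _ ≤ (8*C^2*K₂^(1/qs) * ((n:ℝ)+1)) * (R:ℝ)^(1-1/qs) := hMR

end Branches


end SCBAux

theorem strong_cesaro_cotype_growth
    {X : Type} [NormedAddCommGroup X] [NormedSpace ℂ X]
    (q qs : ℝ) (hq : 2 ≤ q) (hqs : 2 ≤ qs)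
    (hcotype : HasCotypeQ X q) (hcotype' : HasCotypeQ (StrongDual ℂ X) qs)
    (T : X →L[ℂ] X) (C : ℝ) (hT : StrongCesaroBounded T C) :
    ((fun n : ℕ => ‖T ^ n‖) =O[atTop]
        fun n : ℕ => (n : ℝ) / Real.log n ^ (1 / min q qs)) ∧
      (fun n : ℕ => ‖T ^ n‖) =o[atTop] fun n : ℕ => (n : ℝ) := by
  obtain ⟨K₁, hK₁, hcot₁⟩ := hcotype
  obtain ⟨K₂, hK₂, hcot₂⟩ := hcotype'
  obtain ⟨hC, hces⟩ := hT
  have hs2 : 2 ≤ min q qs := le_min hq hqs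
  have hspos : 0 < min q qs := by linarith
  have hinvpos : 0 < 1 / min q qs := by positivity
  have hinvle : 1 / min q qs ≤ 1 := by
    rw [div_le_one hspos]; linarith
  -- the key growth estimate
  have KEY : ∃ c₁ : ℝ, 0 < c₁ ∧ ∀ n R : ℕ, 1 ≤ R → 2^R ≤ n →
      ‖T^n‖ * (R:ℝ)^(1 / min q qs) ≤ c₁ * ((n:ℝ)+1) := by
    rcases le_total q qs with hmin | hmin
    · refine ⟨8*C^2*K₁^(1/q), by positivity, fun n R hR hRn => ?_⟩
      have h := SCBAux.branch_primal q C K₁ hq hC hK₁ T hces hcot₁ n R hR hRn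
      rwa [min_eq_left hmin]
    · refine ⟨8*C^2*K₂^(1/qs), by positivity, fun n R hR hRn => ?_⟩
      have h := SCBAux.branch_dual qs C K₂ hqs hC hK₂ T hces hcot₂ n R hR hRn
      rwa [min_eq_right hmin]
  obtain ⟨c₁, hc₁, key⟩ := KEY
  -- big-O statement
  have hO : (fun n : ℕ => ‖T ^ n‖) =O[atTop]
      fun n : ℕ => (n : ℝ) / Real.log n ^ (1 / min q qs) := by
    rw [Asymptotics.isBigO_iff]
    refine ⟨4*c₁, ?_⟩
    filter_upwards [Filter.eventually_ge_atTop 4] with n hn4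
    set L := Nat.log 2 n with hLdef
    have hn0 : n ≠ 0 := by omega
    have hL1 : 1 ≤ L := Nat.log_pos (by norm_num) (by omega)
    have hpowL : 2^L ≤ n := Nat.pow_log_le_self 2 hn0
    have h1 := key n L hL1 hpowL
    have hLpos : (0:ℝ) < (L:ℝ) := by exact_mod_cast hL1
    have hLrpos : (0:ℝ) < (L:ℝ)^(1 / min q qs) := Real.rpow_pos_of_pos hLpos _
    have hlog2L : Real.log n ≤ 2*(L:ℝ) := by
      have hb : (n:ℝ) < 2^(L+1) := by
        have hb' := Nat.lt_pow_succ_log_self (by norm_num : 1 < 2) n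
        exact_mod_cast hb'
      have hnpos : (0:ℝ) < (n:ℝ) := by
        have : (0:ℕ) < n := by omega
        exact_mod_cast this
      calc Real.log n ≤ Real.log (2^(L+1)) :=
            Real.log_le_log hnpos (le_of_lt hb)
        _ = ((L:ℝ)+1) * Real.log 2 := by
            rw [Real.log_pow]; push_cast; ring
        _ ≤ ((L:ℝ)+1) * 1 := by
            apply mul_le_mul_of_nonneg_left _ (by positivity)
            calc Real.log 2 ≤ 2 - 1 := Real.log_le_sub_one_of_pos (by norm_num)
              _ = 1 := by norm_num
        _ ≤ 2*(L:ℝ) := by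
            have hL1' : (1:ℝ) ≤ (L:ℝ) := by exact_mod_cast hL1
            linarith
    have hlogpos : 0 < Real.log n := by
      apply Real.log_pos
      have : (1:ℕ) < n := by omega
      exact_mod_cast this
    have hlogr : Real.log n ^ (1 / min q qs) ≤ 2 * (L:ℝ)^(1 / min q qs) := by
      calc Real.log n ^ (1 / min q qs) ≤ (2*(L:ℝ)) ^ (1 / min q qs) :=
            Real.rpow_le_rpow (le_of_lt hlogpos) hlog2L (le_of_lt hinvpos)
        _ = 2^(1 / min q qs) * (L:ℝ)^(1 / min q qs) :=
            Real.mul_rpow (by norm_num) (le_of_lt hLpos)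
        _ ≤ 2 * (L:ℝ)^(1 / min q qs) := by
            apply mul_le_mul_of_nonneg_right _ (le_of_lt hLrpos)
            calc (2:ℝ)^(1 / min q qs) ≤ (2:ℝ)^(1:ℝ) :=
                  Real.rpow_le_rpow_of_exponent_le (by norm_num) hinvle
              _ = 2 := Real.rpow_one 2
    have hlogrpos : 0 < Real.log n ^ (1 / min q qs) := Real.rpow_pos_of_pos hlogpos _
    have hM : ‖T^n‖ * Real.log n ^ (1 / min q qs) ≤ 4*c₁*(n:ℝ) := by
      have hn1 : (1:ℝ) ≤ (n:ℝ) := by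
        have : (1:ℕ) ≤ n := by omega
        exact_mod_cast this
      calc ‖T^n‖ * Real.log n ^ (1 / min q qs)
          ≤ ‖T^n‖ * (2 * (L:ℝ)^(1 / min q qs)) :=
            mul_le_mul_of_nonneg_left hlogr (norm_nonneg _)
        _ = 2 * (‖T^n‖ * (L:ℝ)^(1 / min q qs)) := by ring
        _ ≤ 2 * (c₁ * ((n:ℝ)+1)) := by linarith [h1]
        _ ≤ 2 * (c₁ * ((n:ℝ)+(n:ℝ))) := by nlinarith
        _ = 4*c₁*(n:ℝ) := by ring
    have hgoal : ‖T^n‖ ≤ 4*c₁ * ((n:ℝ) / Real.log n ^ (1 / min q qs)) := by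
      have h2 : 4*c₁ * ((n:ℝ) / Real.log n ^ (1 / min q qs))
          = (4*c₁*(n:ℝ)) / Real.log n ^ (1 / min q qs) := by ring
      rw [h2, le_div_iff₀ hlogrpos]
      exact hM
    calc ‖‖T ^ n‖‖ = ‖T^n‖ := Real.norm_of_nonneg (norm_nonneg _)
      _ ≤ 4*c₁ * ((n:ℝ) / Real.log n ^ (1 / min q qs)) := hgoal
      _ = 4*c₁ * ‖(n:ℝ) / Real.log n ^ (1 / min q qs)‖ := by
          rw [Real.norm_of_nonneg
            (div_nonneg (Nat.cast_nonneg n) (Real.rpow_nonneg hlogpos.le _))]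
  -- little-o statement
  have ho : (fun n : ℕ => (n : ℝ) / Real.log n ^ (1 / min q qs)) =o[atTop]
      fun n : ℕ => (n : ℝ) := by
    rw [Asymptotics.isLittleO_iff]
    intro ε hε
    have htend : Tendsto (fun n : ℕ => Real.log n ^ (1 / min q qs)) atTop atTop := by
      apply (tendsto_rpow_atTop hinvpos).comp
      exact Real.tendsto_log_atTop.comp tendsto_natCast_atTop_atTop
    filter_upwards [htend.eventually_ge_atTop ε⁻¹, Filter.eventually_ge_atTop 1]
      with n hnt hn1
    have htpos : 0 < Real.log n ^ (1 / min q qs) :=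
      lt_of_lt_of_le (inv_pos.mpr hε) hnt
    have hnn : (0:ℝ) ≤ (n:ℝ) := Nat.cast_nonneg n
    rw [Real.norm_of_nonneg (div_nonneg hnn (le_of_lt htpos)),
      Real.norm_of_nonneg hnn, div_le_iff₀ htpos]
    have h1 : 1 ≤ ε * Real.log n ^ (1 / min q qs) := by
      calc (1:ℝ) = ε * ε⁻¹ := by field_simp
        _ ≤ ε * Real.log n ^ (1 / min q qs) :=
          mul_le_mul_of_nonneg_left hnt (le_of_lt hε)
    calc (n:ℝ) = (n:ℝ) * 1 := by ring
      _ ≤ (n:ℝ) * (ε * Real.log n ^ (1 / min q qs)) :=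
          mul_le_mul_of_nonneg_left h1 hnn
      _ = ε * (n:ℝ) * Real.log n ^ (1 / min q qs) := by ring
  exact ⟨hO, hO.trans_isLittleO ho⟩
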